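/- arXiv:1307.4919 — 2 statements merged into one kernel-verified Lean document; each statement's English description precedes it below -/
import Mathlib

section
/- Let b ∈ GL_n(K) and k ≥ 1, and let N ≥ 1 be an integer with N > μ((bσ)^j)_1 − μ((bσ)^j)_n for every 1 ≤ j ≤ k−1. Then for every g ∈ GL_n(W(k)) with g ≡ 1 (mod p^N) one has μ(((b·g)σ)^i) = μ((bσ)^i) for all i = 1,…,k. (In other words, each refined Hodge stratum H_{μ̄,k}(GL_n) is invariant under right multiplication by a principal congruence subgroup of GL_n(W(k)).) -/
/-!
Statement 1.  Setting: `p` prime, `κ` algebraically closed of characteristic `p`,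
`𝕎 = W(κ)`, `K = Frac(W(κ))`, `σ` the Frobenius automorphism of `K` (lifting the
Frobenius of `W(κ)`).  `(bσ)^i := b·σ(b)·…·σ^{i−1}(b)`.

If `N ≥ 1` satisfies `N > μ((bσ)^j)₁ − μ((bσ)^j)ₙ` for `1 ≤ j ≤ k−1`, then for every
`g ∈ GL_n(W(κ))` with `g ≡ 1 (mod p^N)` one has `μ(((b·g)σ)^i) = μ((bσ)^i)` for
`i = 1,…,k`.
-/

open Matrix

noncomputable section

variable (p : ℕ) [Fact p.Prime] (κ : Type) [Field κ] [IsAlgClosed κ] [CharP κ p]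

local notation "𝕎" => WittVector p κ
local notation "K" => FractionRing (WittVector p κ)

/-- `c ∈ GL_n(W(κ)) ⊆ GL_n(K)`. -/
def IsIntegralUnit {n : ℕ} (c : Matrix (Fin n) (Fin n) K) : Prop :=
  ∃ d : Matrix (Fin n) (Fin n) 𝕎, IsUnit d.det ∧ c = d.map (algebraMap 𝕎 K)

/-- `μ` is the Hodge point of `b`. -/
def IsHodgePoint {n : ℕ} (b : Matrix (Fin n) (Fin n) K) (μ : Fin n → ℤ) : Prop :=
  Antitone μ ∧ ∃ c₁ c₂ : Matrix (Fin n) (Fin n) K, IsIntegralUnit p κ c₁ ∧ IsIntegralUnit p κ c₂ ∧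
    b = c₁ * Matrix.diagonal (fun i => (p : K) ^ (μ i)) * c₂

set_option linter.unusedSectionVars false
set_option linter.unusedVariables false

/-- `twistedPow σ b i = (bσ)^i = b·σ(b)·σ²(b)···σ^{i−1}(b)`. -/
def twistedPow {n : ℕ} (σ : K ≃+* K) (b : Matrix (Fin n) (Fin n) K) :
    ℕ → Matrix (Fin n) (Fin n) K
  | 0 => 1
  | (i + 1) => b * (twistedPow σ b i).map ⇑σ

variable {p κ}

lemma mapSigma_one {n : ℕ} (σ : K ≃+* K) :
    ((1 : Matrix (Fin n) (Fin n) K)).map ⇑σ = 1 :=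
  Matrix.map_one _ (map_zero _) (map_one _)

lemma mapAlg_mul {n : ℕ} (A B : Matrix (Fin n) (Fin n) 𝕎) :
    (A * B).map ⇑(algebraMap 𝕎 K) = A.map (algebraMap 𝕎 K) * B.map (algebraMap 𝕎 K) :=
  Matrix.map_mul

lemma mapSigma_mul {n : ℕ} (σ : K ≃+* K) (A B : Matrix (Fin n) (Fin n) K) :
    (A * B).map ⇑σ = A.map ⇑σ * B.map ⇑σ := by
  have := Matrix.map_mul (L := A) (M := B) (f := (σ : K →+* K))
  simpa using this

lemma mapAlg_one {n : ℕ} :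
    ((1 : Matrix (Fin n) (Fin n) 𝕎)).map ⇑(algebraMap 𝕎 K) = 1 :=
  Matrix.map_one _ (map_zero _) (map_one _)

lemma IsIntegralUnit.mul {n : ℕ} {c₁ c₂ : Matrix (Fin n) (Fin n) K}
    (h₁ : IsIntegralUnit p κ c₁) (h₂ : IsIntegralUnit p κ c₂) : IsIntegralUnit p κ (c₁ * c₂) := by
  obtain ⟨d₁, hd₁, rfl⟩ := h₁
  obtain ⟨d₂, hd₂, rfl⟩ := h₂
  exact ⟨d₁ * d₂, by rw [Matrix.det_mul]; exact hd₁.mul hd₂, (mapAlg_mul d₁ d₂).symm⟩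

lemma IsIntegralUnit.exists_inv {n : ℕ} {c : Matrix (Fin n) (Fin n) K}
    (h : IsIntegralUnit p κ c) :
    ∃ v, IsIntegralUnit p κ v ∧ c * v = 1 ∧ v * c = 1 := by
  obtain ⟨d, hd, rfl⟩ := h
  refine ⟨(d⁻¹).map (algebraMap 𝕎 K), ⟨d⁻¹, ?_, rfl⟩, ?_, ?_⟩
  · exact IsUnit.of_mul_eq_one d.det
      (by rw [← Matrix.det_mul, Matrix.nonsing_inv_mul d hd, Matrix.det_one])
  · rw [← mapAlg_mul, Matrix.mul_nonsing_inv d hd, mapAlg_one]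
  · rw [← mapAlg_mul, Matrix.nonsing_inv_mul d hd, mapAlg_one]

lemma IsIntegralUnit.map_sigma {n : ℕ} (σ : K ≃+* K)
    (hσ : ∀ x : 𝕎, σ (algebraMap 𝕎 K x) = algebraMap 𝕎 K (WittVector.frobenius x))
    {c : Matrix (Fin n) (Fin n) K} (h : IsIntegralUnit p κ c) :
    IsIntegralUnit p κ (c.map ⇑σ) := by
  obtain ⟨d, hd, rfl⟩ := h
  refine ⟨d.map ⇑(WittVector.frobenius : 𝕎 →+* 𝕎), ?_, ?_⟩
  · rw [← RingHom.mapMatrix_apply, ← RingHom.map_det]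
    exact hd.map _
  · ext i j
    simp [Matrix.map_apply, hσ]

lemma IsHodgePoint.mul_right {n : ℕ} {b v : Matrix (Fin n) (Fin n) K} {μ : Fin n → ℤ}
    (h : IsHodgePoint p κ b μ) (hv : IsIntegralUnit p κ v) : IsHodgePoint p κ (b * v) μ := by
  obtain ⟨hμ, c₁, c₂, h₁, h₂, rfl⟩ := h
  exact ⟨hμ, c₁, c₂ * v, h₁, h₂.mul hv, by simp only [mul_assoc]⟩

lemma IsHodgePoint.mul_right_iff {n : ℕ} {b v : Matrix (Fin n) (Fin n) K} {μ : Fin n → ℤ}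
    (hv : IsIntegralUnit p κ v) : IsHodgePoint p κ (b * v) μ ↔ IsHodgePoint p κ b μ := by
  obtain ⟨w, hw, hvw, -⟩ := hv.exists_inv
  refine ⟨fun h => ?_, fun h => h.mul_right hv⟩
  have := h.mul_right hw
  rwa [mul_assoc, hvw, mul_one] at this

lemma IsHodgePoint.map_sigma {n : ℕ} (σ : K ≃+* K)
    (hσ : ∀ x : 𝕎, σ (algebraMap 𝕎 K x) = algebraMap 𝕎 K (WittVector.frobenius x))
    {b : Matrix (Fin n) (Fin n) K} {μ : Fin n → ℤ}
    (h : IsHodgePoint p κ b μ) : IsHodgePoint p κ (b.map ⇑σ) μ := by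
  obtain ⟨hμ, c₁, c₂, h₁, h₂, rfl⟩ := h
  refine ⟨hμ, c₁.map ⇑σ, c₂.map ⇑σ, h₁.map_sigma σ hσ, h₂.map_sigma σ hσ, ?_⟩
  have hD : (Matrix.diagonal (fun i => (p : K) ^ (μ i))).map ⇑σ
      = Matrix.diagonal (fun i => (p : K) ^ (μ i)) := by
    rw [Matrix.diagonal_map (map_zero σ)]
    have he : (fun m => σ ((p : K) ^ (μ m))) = fun i => (p : K) ^ (μ i) := by
      funext m; rw [map_zpow₀, map_natCast]
    rw [he]
  rw [mapSigma_mul, mapSigma_mul, hD]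

lemma dvd_entries_mul_left {n : ℕ} {R : Type*} [CommRing R] (x : R)
    {A : Matrix (Fin n) (Fin n) R} (B : Matrix (Fin n) (Fin n) R)
    (h : ∀ i j, x ∣ A i j) : ∀ i j, x ∣ (A * B) i j := by
  intro i j
  rw [Matrix.mul_apply]
  exact Finset.dvd_sum fun l _ => (h i l).mul_right _

lemma dvd_entries_mul_right {n : ℕ} {R : Type*} [CommRing R] (x : R)
    (A : Matrix (Fin n) (Fin n) R) {B : Matrix (Fin n) (Fin n) R}
    (h : ∀ i j, x ∣ B i j) : ∀ i j, x ∣ (A * B) i j := by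
  intro i j
  rw [Matrix.mul_apply]
  exact Finset.dvd_sum fun l _ => (h l j).mul_left _

lemma dvd_det_sub_one {n : ℕ} {R : Type*} [CommRing R] (x : R) (A : Matrix (Fin n) (Fin n) R)
    (h : ∀ i j, x ∣ (A i j - (1 : Matrix (Fin n) (Fin n) R) i j)) :
    x ∣ A.det - 1 := by
  set I := Ideal.span {x}
  set φ := Ideal.Quotient.mk I
  have hmap : A.map ⇑φ = (1 : Matrix (Fin n) (Fin n) R).map ⇑φ := by
    ext i j
    simp only [Matrix.map_apply]
    rw [Ideal.Quotient.mk_eq_mk_iff_sub_mem]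
    exact Ideal.mem_span_singleton.mpr (h i j)
  have h1 : φ A.det = φ 1 := by
    rw [RingHom.map_det, RingHom.mapMatrix_apply, hmap,
      Matrix.map_one _ (map_zero φ) (map_one φ), Matrix.det_one, _root_.map_one]
  have h2 : A.det - 1 ∈ I := by
    rwa [← Ideal.Quotient.mk_eq_mk_iff_sub_mem]
  exact Ideal.mem_span_singleton.mp h2

lemma isUnit_of_p_dvd_sub_one {u : 𝕎} (h : (p : 𝕎) ∣ u - 1) : IsUnit u := by
  obtain ⟨y, hy⟩ := h
  have hu : u = 1 + (p : 𝕎) * y := by linear_combination hy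
  apply WittVector.isUnit_of_coeff_zero_ne_zero
  rw [hu, WittVector.add_coeff_zero, WittVector.one_coeff_zero, WittVector.mul_coeff_zero,
    WittVector.coeff_p_zero]
  simp

lemma isUnit_one_add_det {n : ℕ} (M : Matrix (Fin n) (Fin n) 𝕎)
    (h : ∀ i j, (p : 𝕎) ∣ M i j) : IsUnit (1 + M).det := by
  apply isUnit_of_p_dvd_sub_one
  apply dvd_det_sub_one
  intro i j
  simpa [Matrix.add_apply] using h i j

lemma keyA {n : ℕ} (N : ℕ) {μ : Fin n → ℤ}
    (hgap : ∀ j l : Fin n, 1 ≤ (N : ℤ) + μ l - μ j)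
    {C : Matrix (Fin n) (Fin n) K} (hC : IsHodgePoint p κ C μ)
    (g : Matrix (Fin n) (Fin n) 𝕎)
    (hcong : ∀ i j, (p : 𝕎) ^ N ∣ (g i j - (1 : Matrix (Fin n) (Fin n) 𝕎) i j)) :
    ∃ w, IsIntegralUnit p κ w ∧ C * w = g.map ⇑(algebraMap 𝕎 K) * C := by
  obtain ⟨hμ, c₁, c₂, ⟨d₁, hd₁, rfl⟩, ⟨d₂, hd₂, rfl⟩, rfl⟩ := hC
  have h₁L : d₁⁻¹ * d₁ = 1 := Matrix.nonsing_inv_mul d₁ hd₁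
  have h₁R : d₁ * d₁⁻¹ = 1 := Matrix.mul_nonsing_inv d₁ hd₁
  have h₂L : d₂⁻¹ * d₂ = 1 := Matrix.nonsing_inv_mul d₂ hd₂
  have h₂R : d₂ * d₂⁻¹ = 1 := Matrix.mul_nonsing_inv d₂ hd₂
  set E : Matrix (Fin n) (Fin n) 𝕎 := d₁⁻¹ * (g - 1) * d₁ with hEdef
  have hEdvd : ∀ i j, (p : 𝕎) ^ N ∣ E i j := by
    apply dvd_entries_mul_left
    apply dvd_entries_mul_right
    intro i j
    simpa [Matrix.sub_apply] using hcong i j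
  have hEe : ∀ j l, ∃ y, E j l = (p : 𝕎) ^ N * y := hEdvd
  choose ee hee using hEe
  set t : Fin n → Fin n → ℕ := fun j l => ((N : ℤ) + μ l - μ j).toNat with htdef
  have ht : ∀ j l, (t j l : ℤ) = (N : ℤ) + μ l - μ j := fun j l =>
    Int.toNat_of_nonneg (by linarith [hgap j l])
  have ht1 : ∀ j l, t j l ≠ 0 := by
    intro j l h0
    have := ht j l
    rw [h0] at this
    have := hgap j l
    omega
  set M : Matrix (Fin n) (Fin n) 𝕎 := Matrix.of fun j l => (p : 𝕎) ^ (t j l) * ee j l with hMdef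
  have hMdvd : ∀ j l, (p : 𝕎) ∣ M j l := fun j l =>
    (dvd_pow_self (p : 𝕎) (ht1 j l)).mul_right _
  have hdetinv₂ : IsUnit (d₂⁻¹).det :=
    IsUnit.of_mul_eq_one d₂.det (by rw [← Matrix.det_mul, h₂L, Matrix.det_one])
  set wW : Matrix (Fin n) (Fin n) 𝕎 := d₂⁻¹ * (1 + M) * d₂ with hwWdef
  have hwdet : IsUnit wW.det := by
    rw [hwWdef, Matrix.det_mul, Matrix.det_mul]
    exact (hdetinv₂.mul (isUnit_one_add_det M hMdvd)).mul hd₂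
  refine ⟨wW.map ⇑(algebraMap 𝕎 K), ⟨wW, hwdet, rfl⟩, ?_⟩
  have hp0 : (p : K) ≠ 0 := WittVector.FractionRing.p_nonzero p κ
  set D : Matrix (Fin n) (Fin n) K := Matrix.diagonal (fun i => (p : K) ^ (μ i)) with hDdef
  set φ := algebraMap 𝕎 K with hφdef
  -- key2 over 𝕎 :
  have key2 : g * d₁ = d₁ * (1 + E) := by
    have hstep : d₁ * E = (g - 1) * d₁ := by
      rw [hEdef]
      calc d₁ * (d₁⁻¹ * (g - 1) * d₁) = (d₁ * d₁⁻¹) * ((g - 1) * d₁) := by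
            simp only [mul_assoc]
        _ = (g - 1) * d₁ := by rw [h₁R, one_mul]
    rw [mul_add, mul_one, hstep, sub_mul, one_mul]
    abel
  -- key0 :
  have key0 : D * (M.map ⇑φ) = (E.map ⇑φ) * D := by
    ext j l
    rw [Matrix.diagonal_mul, Matrix.mul_diagonal, Matrix.map_apply, Matrix.map_apply]
    have hM : M j l = (p : 𝕎) ^ (t j l) * ee j l := rfl
    rw [hM, hee j l, _root_.map_mul, _root_.map_mul, map_pow, map_pow, map_natCast]
    set x := φ (ee j l)
    rw [← zpow_natCast ((p : K)) (t j l), ← zpow_natCast ((p : K)) N, ht j l]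
    calc (p : K) ^ (μ j) * ((p : K) ^ ((N : ℤ) + μ l - μ j) * x)
        = (p : K) ^ (μ j + ((N : ℤ) + μ l - μ j)) * x := by
          rw [← mul_assoc, ← zpow_add₀ hp0]
      _ = (p : K) ^ ((N : ℤ) + μ l) * x := by
          rw [show μ j + ((N : ℤ) + μ l - μ j) = (N : ℤ) + μ l by ring]
      _ = (p : K) ^ ((N : ℤ)) * x * (p : K) ^ (μ l) := by
          rw [zpow_add₀ hp0]; ring
  have hadd : ∀ (X : Matrix (Fin n) (Fin n) 𝕎), (1 + X).map ⇑φ = 1 + X.map ⇑φ := by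
    intro X
    rw [Matrix.map_add _ (map_add φ), mapAlg_one]
  have key1 : D * ((1 + M).map ⇑φ) = ((1 + E).map ⇑φ) * D := by
    rw [hadd, hadd, mul_add, add_mul, mul_one, one_mul, key0]
  have h2R' : (d₂.map ⇑φ) * ((d₂⁻¹).map ⇑φ) = 1 := by
    rw [← mapAlg_mul, h₂R, mapAlg_one]
  have hwW' : wW.map ⇑φ = (d₂⁻¹).map ⇑φ * ((1 + M).map ⇑φ) * d₂.map ⇑φ := by
    rw [hwWdef, mapAlg_mul, mapAlg_mul]
  rw [hwW']
  calc d₁.map ⇑φ * D * d₂.map ⇑φ * ((d₂⁻¹).map ⇑φ * ((1 + M).map ⇑φ) * d₂.map ⇑φ)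
      = d₁.map ⇑φ * D * (d₂.map ⇑φ * (d₂⁻¹).map ⇑φ) * (((1 + M).map ⇑φ) * d₂.map ⇑φ) := by
        simp only [mul_assoc]
    _ = d₁.map ⇑φ * (D * ((1 + M).map ⇑φ)) * d₂.map ⇑φ := by
        rw [h2R', mul_one]; simp only [mul_assoc]
    _ = d₁.map ⇑φ * (((1 + E).map ⇑φ) * D) * d₂.map ⇑φ := by rw [key1]
    _ = (d₁.map ⇑φ * ((1 + E).map ⇑φ)) * D * d₂.map ⇑φ := by simp only [mul_assoc]
    _ = (g.map ⇑φ * d₁.map ⇑φ) * D * d₂.map ⇑φ := by rw [← mapAlg_mul, ← key2, mapAlg_mul]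
    _ = g.map ⇑φ * (d₁.map ⇑φ * D * d₂.map ⇑φ) := by simp only [mul_assoc]

variable (p κ)

theorem statement_1 (n : ℕ) (hn : 0 < n) (σ : K ≃+* K)
    (hσ : ∀ x : 𝕎, σ (algebraMap 𝕎 K x) = algebraMap 𝕎 K (WittVector.frobenius x))
    (b : Matrix (Fin n) (Fin n) K) (hb : IsUnit b.det)
    (k : ℕ) (hk : 1 ≤ k) (N : ℕ) (hN1 : 1 ≤ N)
    (μs : ℕ → Fin n → ℤ)
    (hμs : ∀ j, 1 ≤ j → j ≤ k - 1 → IsHodgePoint p κ (twistedPow p κ σ b j) (μs j))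
    (hN : ∀ j, 1 ≤ j → j ≤ k - 1 → (N : ℤ) > μs j ⟨0, hn⟩ - μs j ⟨n - 1, by omega⟩)
    (g : Matrix (Fin n) (Fin n) 𝕎) (hg : IsUnit g.det)
    (hcong : ∀ i j, (p : 𝕎) ^ N ∣ (g i j - (1 : Matrix (Fin n) (Fin n) 𝕎) i j)) :
    ∀ i, 1 ≤ i → i ≤ k → ∀ μ : Fin n → ℤ,
      IsHodgePoint p κ (twistedPow p κ σ (b * g.map (algebraMap 𝕎 K)) i) μ ↔
        IsHodgePoint p κ (twistedPow p κ σ b i) μ := by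
  have hg' : IsIntegralUnit p κ (g.map (algebraMap 𝕎 K)) := ⟨g, hg, rfl⟩
  have main : ∀ i, 1 ≤ i → (i ≤ k → ∃ u, IsIntegralUnit p κ u ∧
      twistedPow p κ σ (b * g.map (algebraMap 𝕎 K)) i = twistedPow p κ σ b i * u) := by
    intro i hi
    induction i, hi using Nat.le_induction with
    | base =>
      intro _
      refine ⟨g.map (algebraMap 𝕎 K), hg', ?_⟩
      show (b * g.map (algebraMap 𝕎 K)) *
          ((twistedPow p κ σ (b * g.map (algebraMap 𝕎 K)) 0).map ⇑σ)
        = (b * (twistedPow p κ σ b 0).map ⇑σ) * g.map (algebraMap 𝕎 K)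
      rw [show twistedPow p κ σ (b * g.map (algebraMap 𝕎 K)) 0 = 1 from rfl,
        show twistedPow p κ σ b 0 = 1 from rfl, mapSigma_one, mul_one, mul_one]
    | succ i hi1 ih =>
      intro hik
      obtain ⟨u, hu, hui⟩ := ih (by omega)
      have hHP : IsHodgePoint p κ (twistedPow p κ σ b i) (μs i) := hμs i hi1 (by omega)
      have hHPσ := hHP.map_sigma σ hσ
      have hgap : ∀ j l : Fin n, 1 ≤ (N : ℤ) + μs i l - μs i j := by
        intro j l
        have h1 : μs i ⟨n - 1, by omega⟩ ≤ μs i l := hHP.1 (by rw [Fin.le_def]; simp; omega)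
        have h2 : μs i j ≤ μs i ⟨0, hn⟩ := hHP.1 (by rw [Fin.le_def]; simp)
        have h3 := hN i hi1 (by omega)
        omega
      obtain ⟨w, hw, hCw⟩ := keyA N hgap hHPσ g hcong
      refine ⟨w * (u.map ⇑σ), hw.mul (hu.map_sigma σ hσ), ?_⟩
      show (b * g.map (algebraMap 𝕎 K)) *
          ((twistedPow p κ σ (b * g.map (algebraMap 𝕎 K)) i).map ⇑σ)
        = (b * (twistedPow p κ σ b i).map ⇑σ) * (w * u.map ⇑σ)
      rw [hui, mapSigma_mul]
      calc (b * g.map (algebraMap 𝕎 K)) * ((twistedPow p κ σ b i).map ⇑σ * u.map ⇑σ)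
          = b * ((g.map (algebraMap 𝕎 K) * (twistedPow p κ σ b i).map ⇑σ) * u.map ⇑σ) := by
            simp only [mul_assoc]
        _ = b * (((twistedPow p κ σ b i).map ⇑σ * w) * u.map ⇑σ) := by rw [hCw]
        _ = (b * (twistedPow p κ σ b i).map ⇑σ) * (w * u.map ⇑σ) := by simp only [mul_assoc]
  intro i hi1 hik μ
  obtain ⟨u, hu, heq⟩ := main i hi1 hik
  rw [heq]
  exact IsHodgePoint.mul_right_iff hu

end
end

section
/- For all A, B ∈ GL_n(K) and every 1 ≤ l ≤ n: Σ_{i=n−l+1}^n μ(AB)_i ≥ Σ_{i=n−l+1}^n μ(A)_i + Σ_{i=n−l+1}^n μ(B)_i, with equality for l = n. (Equivalently, in the dominance order on decreasing tuples, μ(AB) ≼ μ(A) ⊕ μ(B), where ⊕ is entrywise addition of the decreasing representatives.) -/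
/-!
Statement 6.  For `A, B ∈ GL_n(K)` and `1 ≤ l ≤ n`:
`Σ_{i=n−l+1}^n μ(AB)_i ≥ Σ_{i=n−l+1}^n μ(A)_i + Σ_{i=n−l+1}^n μ(B)_i`,
with equality for `l = n`.  With 0-indexed decreasing tuples, the sum over the
last `l` entries is the sum over indices `i` with `n − l ≤ i`.
-/

open Matrix

noncomputable section

variable (p : ℕ) [Fact p.Prime] (κ : Type) [Field κ] [IsAlgClosed κ] [CharP κ p]

local notation "𝕎" => WittVector p κ
local notation "K" => FractionRing (WittVector p κ)

section Aux
set_option linter.unusedSectionVars false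

/- ### Generic lemmas -/

/-- Determinant of a rectangular product, expanded by multilinearity in the rows. -/
theorem det_mul_expand {R : Type*} [CommRing R] {l n : ℕ}
    (P : Matrix (Fin l) (Fin n) R) (Q : Matrix (Fin n) (Fin l) R) :
    (P * Q).det = ∑ r : Fin l → Fin n, (∏ i, P i (r i)) * (Q.submatrix r id).det := by
  have h1 : (P * Q) = Matrix.of (fun i => ∑ k : Fin n, P i k • Q k) := by
    ext i j
    simp [Matrix.mul_apply, Finset.sum_apply]
  rw [h1]
  have h2 : (Matrix.of (fun i => ∑ k : Fin n, P i k • Q k)).det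
      = Matrix.detRowAlternating (fun i => ∑ k : Fin n, P i k • Q k) := rfl
  have h4 := (Matrix.detRowAlternating (R := R) (n := Fin l)).toMultilinearMap.map_sum
    (fun i k => P i k • Q k)
  simp only [AlternatingMap.coe_multilinearMap] at h4
  rw [h2, h4]
  refine Finset.sum_congr rfl fun r _ => ?_
  have h3 := (Matrix.detRowAlternating (R := R) (n := Fin l)).toMultilinearMap.map_smul_univ
    (fun i => P i (r i)) (fun i => Q (r i))
  simp only [AlternatingMap.coe_multilinearMap] at h3 ⊢
  rw [h3, smul_eq_mul]
  rfl

theorem prod_zpow' {M₀ : Type*} [CommGroupWithZero M₀] {x : M₀} (hx : x ≠ 0) {ι : Type*}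
    (s : Finset ι) (f : ι → ℤ) : ∏ i ∈ s, x ^ f i = x ^ (∑ i ∈ s, f i) := by
  classical
  induction s using Finset.induction with
  | empty => simp
  | insert _ _ h ih => rw [Finset.prod_insert h, Finset.sum_insert h, ih, zpow_add₀ hx]

/-- The order-embedding of `Fin l` onto the last `l` indices of `Fin n`. -/
def emb (n l : ℕ) (hln : l ≤ n) (k : Fin l) : Fin n :=
  ⟨n - l + (k : ℕ), by have := k.isLt; omega⟩

theorem emb_inj {n l : ℕ} (hln : l ≤ n) : Function.Injective (emb n l hln) := by
  intro a b hab
  have : n - l + (a : ℕ) = n - l + (b : ℕ) := congrArg Fin.val hab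
  exact Fin.ext (by omega)

theorem filter_eq_image {n l : ℕ} (hln : l ≤ n) :
    Finset.univ.filter (fun i : Fin n => n - l ≤ (i : ℕ)) =
      Finset.image (emb n l hln) Finset.univ := by
  ext i
  simp only [Finset.mem_filter, Finset.mem_univ, true_and, Finset.mem_image]
  constructor
  · intro hi
    refine ⟨⟨(i : ℕ) - (n - l), by have := i.isLt; omega⟩, ?_⟩
    apply Fin.ext
    simp only [emb]
    omega
  · rintro ⟨k, rfl⟩
    simp [emb]

theorem sum_filter_eq_sum_emb {n l : ℕ} (hln : l ≤ n) (μ : Fin n → ℤ) :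
    ∑ i ∈ Finset.univ.filter (fun i : Fin n => n - l ≤ (i : ℕ)), μ i
      = ∑ k : Fin l, μ (emb n l hln k) := by
  rw [filter_eq_image hln, Finset.sum_image (fun x _ y _ h => emb_inj hln h)]

theorem sum_if_eq_sum_emb {n l : ℕ} (hln : l ≤ n) (μ : Fin n → ℤ) :
    (∑ i : Fin n, if n - l ≤ (i : ℕ) then μ i else 0) = ∑ k : Fin l, μ (emb n l hln k) := by
  rw [← sum_filter_eq_sum_emb hln μ, Finset.sum_filter]

/-- The sum of an antitone sequence over any `l` distinct indices is at least the sum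
over the last `l` indices. -/
theorem sum_antitone_le {n l : ℕ} (hl : 1 ≤ l) (hln : l ≤ n) (α : Fin n → ℤ) (hα : Antitone α)
    (g : Fin l → Fin n) (hg : Function.Injective g) :
    (∑ k : Fin l, α (emb n l hln k)) ≤ ∑ i, α (g i) := by
  classical
  rw [← sum_filter_eq_sum_emb hln α]
  set B := Finset.univ.filter (fun i : Fin n => n - l ≤ (i : ℕ)) with hBdef
  set T := Finset.image g Finset.univ with hTdef
  have hT : ∑ i, α (g i) = ∑ i ∈ T, α i :=
    (Finset.sum_image (by intro x _ y _ h; exact hg h)).symm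
  rw [hT]
  have hTc : T.card = l := by
    rw [hTdef, Finset.card_image_of_injective _ hg, Finset.card_univ, Fintype.card_fin]
  have hBc : B.card = l := by
    rw [hBdef, filter_eq_image hln, Finset.card_image_of_injective _ (emb_inj hln),
      Finset.card_univ, Fintype.card_fin]
  set c := α ⟨n - l, by omega⟩ with hc
  have h1 : ∀ x ∈ T \ B, c ≤ α x := by
    intro x hx
    rw [Finset.mem_sdiff] at hx
    have : ¬ (n - l ≤ (x : ℕ)) := by
      intro h
      exact hx.2 (by simp only [hBdef, Finset.mem_filter, Finset.mem_univ, true_and]; omega)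
    exact hα (by rw [Fin.le_def]; simp; omega)
  have h2 : ∀ x ∈ B \ T, α x ≤ c := by
    intro x hx
    rw [Finset.mem_sdiff, hBdef, Finset.mem_filter] at hx
    exact hα (by rw [Fin.le_def]; simp; omega)
  have hcard : (B \ T).card = (T \ B).card := by
    rw [Finset.card_sdiff_comm (hBc.trans hTc.symm)]
  have e1 : ∑ i ∈ B ∩ T, α i + ∑ i ∈ B \ T, α i = ∑ i ∈ B, α i :=
    Finset.sum_inter_add_sum_sdiff B T α
  have e2 : ∑ i ∈ T ∩ B, α i + ∑ i ∈ T \ B, α i = ∑ i ∈ T, α i :=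
    Finset.sum_inter_add_sum_sdiff T B α
  have e3 : B ∩ T = T ∩ B := Finset.inter_comm B T
  have i1 : ∑ i ∈ B \ T, α i ≤ (B \ T).card • c := Finset.sum_le_card_nsmul _ _ _ h2
  have i2 : (T \ B).card • c ≤ ∑ i ∈ T \ B, α i := Finset.card_nsmul_le_sum _ _ _ h1
  rw [hcard] at i1
  rw [e3] at e1
  omega

variable {p κ}

/- ### Valuation-style lemmas -/

theorem phi_inj : Function.Injective (algebraMap 𝕎 K) :=
  IsFractionRing.injective 𝕎 K

theorem pW_ne_zero : (p : 𝕎) ≠ 0 := (WittVector.irreducible p).ne_zero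

theorem pK_ne_zero : (p : K) ≠ 0 := by
  rw [← map_natCast (algebraMap 𝕎 K) p, ne_eq, map_eq_zero_iff _ phi_inj]
  exact pW_ne_zero

variable (p κ) in
/-- `x` has `p`-adic valuation at least `m`. -/
def SV (m : ℤ) (x : K) : Prop := ∃ y : 𝕎, x = algebraMap 𝕎 K y * (p : K) ^ m

theorem SV_zero (m : ℤ) : SV p κ m 0 := ⟨0, by simp⟩

theorem SV_int (y : 𝕎) : SV p κ 0 (algebraMap 𝕎 K y) := ⟨y, by simp⟩

theorem SV_mul {m m' : ℤ} {x x' : K} (h : SV p κ m x) (h' : SV p κ m' x') :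
    SV p κ (m + m') (x * x') := by
  obtain ⟨y, rfl⟩ := h; obtain ⟨y', rfl⟩ := h'
  exact ⟨y * y', by rw [_root_.map_mul, zpow_add₀ pK_ne_zero]; ring⟩

theorem SV_anti {m m' : ℤ} {x : K} (hm : m' ≤ m) (h : SV p κ m x) : SV p κ m' x := by
  obtain ⟨y, rfl⟩ := h
  refine ⟨y * p ^ (m - m').toNat, ?_⟩
  rw [_root_.map_mul, map_pow, map_natCast, ← zpow_natCast, Int.toNat_of_nonneg (by omega),
    mul_assoc, ← zpow_add₀ pK_ne_zero]
  congr 2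
  omega

theorem SV_sum {ι : Type*} (s : Finset ι) (m : ℤ) (f : ι → K)
    (h : ∀ i ∈ s, SV p κ m (f i)) : SV p κ m (∑ i ∈ s, f i) := by
  classical
  induction s using Finset.induction with
  | empty => simpa using SV_zero m
  | insert _ _ hx ih =>
    rw [Finset.sum_insert hx]
    obtain ⟨y, hy⟩ := h _ (Finset.mem_insert_self _ _)
    obtain ⟨z, hz⟩ := ih fun i hi => h i (Finset.mem_insert_of_mem hi)
    exact ⟨y + z, by rw [hy, hz, map_add]; ring⟩

theorem SV_zpow (t : ℤ) : SV p κ t ((p : K) ^ t) := ⟨1, by simp⟩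

theorem SV_zpow_le {m t : ℤ} (h : SV p κ m ((p : K) ^ t)) : m ≤ t := by
  by_contra hlt
  push_neg at hlt
  obtain ⟨y, hy⟩ := h
  have hphi : algebraMap 𝕎 K y = (p : K) ^ (t - m) := by
    rw [zpow_sub₀ pK_ne_zero, hy, mul_div_assoc, div_self (zpow_ne_zero _ pK_ne_zero), mul_one]
  have h2 : algebraMap 𝕎 K (y * p ^ (m - t).toNat) = algebraMap 𝕎 K 1 := by
    rw [_root_.map_mul, hphi, map_pow, map_natCast, (algebraMap 𝕎 K).map_one, ← zpow_natCast,
      Int.toNat_of_nonneg (by omega), ← zpow_add₀ pK_ne_zero,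
      show t - m + (m - t) = 0 by ring, zpow_zero]
  have h3 : y * (p : 𝕎) ^ (m - t).toNat = 1 := phi_inj h2
  have hd : (m - t).toNat = (m - t).toNat - 1 + 1 := by omega
  have : IsUnit (p : 𝕎) := by
    refine isUnit_of_dvd_one ⟨y * (p : 𝕎) ^ ((m - t).toNat - 1), ?_⟩
    have hp2 : (p : 𝕎) ^ (m - t).toNat = (p : 𝕎) ^ ((m - t).toNat - 1) * p := by
      conv_lhs => rw [hd]
      rw [pow_succ]
    rw [← h3, hp2]; ring
  exact (WittVector.irreducible p).not_isUnit this

/- ### The key estimate -/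

/-- Inner step: minors of `V · D_β · W` have valuation at least `mβ`. -/
theorem inner_mem {n l : ℕ} (v w : Matrix (Fin n) (Fin n) 𝕎) (β : Fin n → ℤ) (mβ : ℤ)
    (hmβ : ∀ g : Fin l → Fin n, Function.Injective g → mβ ≤ ∑ i, β (g i))
    (r e : Fin l → Fin n) :
    SV p κ mβ (((v.map (algebraMap 𝕎 K) * (Matrix.diagonal (fun i => (p : K) ^ (β i)) *
      w.map (algebraMap 𝕎 K))).submatrix r e).det) := by
  classical
  set φ := algebraMap 𝕎 K with hφ
  set Dβ := Matrix.diagonal (fun i => (p : K) ^ (β i)) with hDβ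
  have hsub : (v.map φ * (Dβ * w.map φ)).submatrix r e
      = (v.map φ).submatrix r id * ((Dβ * w.map φ).submatrix id e) :=
    Matrix.submatrix_mul _ _ r id e Function.bijective_id
  rw [hsub, det_mul_expand]
  apply SV_sum
  intro s _
  have hQ : ((Dβ * w.map φ).submatrix id e).submatrix s id = (Dβ * w.map φ).submatrix s e := rfl
  rw [hQ]
  by_cases hs : Function.Injective s
  · have hDW : (Dβ * w.map φ).submatrix s e
        = Matrix.of (fun i j => (p : K) ^ (β (s i)) * (((w.submatrix s e).map φ)) i j) := by
      ext i j
      simp [hDβ, Matrix.submatrix_apply, Matrix.diagonal_mul, Matrix.map_apply]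
    rw [hDW, Matrix.det_mul_column]
    have m1 : SV p κ 0 (∏ i, (v.map φ).submatrix r id i (s i)) := by
      have : (∏ i, (v.map φ).submatrix r id i (s i)) = φ (∏ i, v (r i) (s i)) := by
        rw [map_prod]; rfl
      rw [this]; exact SV_int _
    have m2 : SV p κ mβ (∏ i, (p : K) ^ (β (s i))) := by
      rw [prod_zpow' pK_ne_zero]
      exact SV_anti (hmβ s hs) (SV_zpow _)
    have m3 : SV p κ 0 (((w.submatrix s e).map φ).det) := by
      rw [show ((w.submatrix s e).map (⇑φ)).det = ((φ.mapMatrix (w.submatrix s e)).det) from by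
        rw [RingHom.mapMatrix_apply], ← RingHom.map_det]
      exact SV_int _
    have := SV_mul m1 (SV_mul m2 m3)
    simpa using this
  · obtain ⟨i, j, hij, hne⟩ := Function.not_injective_iff.mp hs
    have hrows : ((Dβ * w.map φ).submatrix s e) i = ((Dβ * w.map φ).submatrix s e) j := by
      funext j'
      simp [Matrix.submatrix_apply, hij]
    rw [Matrix.det_zero_of_row_eq hne hrows, mul_zero]
    exact SV_zero _

/-- Key estimate: the minors of `U · D_α · V · D_β · W` (`U, V, W` integral) have valuation
at least `mα + mβ`. -/
theorem key_mem {n l : ℕ} (u v w : Matrix (Fin n) (Fin n) 𝕎) (α β : Fin n → ℤ) (mα mβ : ℤ)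
    (hmα : ∀ g : Fin l → Fin n, Function.Injective g → mα ≤ ∑ i, α (g i))
    (hmβ : ∀ g : Fin l → Fin n, Function.Injective g → mβ ≤ ∑ i, β (g i))
    (e : Fin l → Fin n) :
    SV p κ (mα + mβ)
      (((u.map (algebraMap 𝕎 K) * (Matrix.diagonal (fun i => (p : K) ^ (α i)) *
        (v.map (algebraMap 𝕎 K) * (Matrix.diagonal (fun i => (p : K) ^ (β i)) *
        w.map (algebraMap 𝕎 K))))).submatrix e e).det) := by
  classical
  set φ := algebraMap 𝕎 K with hφ
  set Dα := Matrix.diagonal (fun i => (p : K) ^ (α i)) with hDα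
  set Y := v.map φ * (Matrix.diagonal (fun i => (p : K) ^ (β i)) * w.map φ) with hY
  have hsub : ((u.map φ * (Dα * Y)).submatrix e e)
      = (u.map φ).submatrix e id * ((Dα * Y).submatrix id e) :=
    Matrix.submatrix_mul _ _ e id e Function.bijective_id
  rw [hsub, det_mul_expand]
  apply SV_sum
  intro r _
  have hQ : ((Dα * Y).submatrix id e).submatrix r id = (Dα * Y).submatrix r e := rfl
  rw [hQ]
  by_cases hr : Function.Injective r
  · have hDY : (Dα * Y).submatrix r e
        = Matrix.of (fun i j => (p : K) ^ (α (r i)) * ((Y.submatrix r e) i j)) := by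
      ext i j
      simp [hDα, Matrix.submatrix_apply, Matrix.diagonal_mul]
    rw [hDY, Matrix.det_mul_column]
    have m1 : SV p κ 0 (∏ i, (u.map φ).submatrix e id i (r i)) := by
      have : (∏ i, (u.map φ).submatrix e id i (r i)) = φ (∏ i, u (e i) (r i)) := by
        rw [map_prod]; rfl
      rw [this]; exact SV_int _
    have m2 : SV p κ mα (∏ i, (p : K) ^ (α (r i))) := by
      rw [prod_zpow' pK_ne_zero]
      exact SV_anti (hmα r hr) (SV_zpow _)
    have m3 : SV p κ mβ ((Y.submatrix r e).det) := inner_mem v w β mβ hmβ r e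
    have := SV_mul m1 (SV_mul m2 m3)
    simpa using this
  · obtain ⟨i, j, hij, hne⟩ := Function.not_injective_iff.mp hr
    have hrows : ((Dα * Y).submatrix r e) i = ((Dα * Y).submatrix r e) j := by
      funext j'
      simp [Matrix.submatrix_apply, hij]
    rw [Matrix.det_zero_of_row_eq hne hrows, mul_zero]
    exact SV_zero _

/- ### Inverses and determinants of integral units -/

theorem exists_inv_mat {n : ℕ} {d : Matrix (Fin n) (Fin n) 𝕎} (hd : IsUnit d.det) :
    ∃ d' : Matrix (Fin n) (Fin n) 𝕎, IsUnit d'.det ∧ d * d' = 1 ∧ d' * d = 1 := by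
  have hu : IsUnit d := (Matrix.isUnit_iff_isUnit_det d).mpr hd
  obtain ⟨dU, hdU⟩ := hu
  refine ⟨↑dU⁻¹, (Matrix.isUnit_iff_isUnit_det _).mp dU⁻¹.isUnit, ?_, ?_⟩
  · rw [← hdU]; exact dU.mul_inv
  · rw [← hdU]; exact dU.inv_mul

theorem det_decomp {n : ℕ} (d₁ d₂ : Matrix (Fin n) (Fin n) 𝕎) (μ : Fin n → ℤ) :
    (d₁.map (algebraMap 𝕎 K) * Matrix.diagonal (fun i => (p : K) ^ (μ i)) *
        d₂.map (algebraMap 𝕎 K)).det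
      = algebraMap 𝕎 K (d₁.det * d₂.det) * (p : K) ^ (∑ i, μ i) := by
  rw [det_mul, det_mul, det_diagonal, prod_zpow' pK_ne_zero]
  rw [show (d₁.map (⇑(algebraMap 𝕎 K))).det = (((algebraMap 𝕎 K).mapMatrix d₁).det) from by
    rw [RingHom.mapMatrix_apply]]
  rw [show (d₂.map (⇑(algebraMap 𝕎 K))).det = (((algebraMap 𝕎 K).mapMatrix d₂).det) from by
    rw [RingHom.mapMatrix_apply]]
  rw [← RingHom.map_det, ← RingHom.map_det]
  simp only [_root_.map_mul]
  ring

end Aux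

theorem statement_6 (n : ℕ) (A B : Matrix (Fin n) (Fin n) K)
    (hA : IsUnit A.det) (hB : IsUnit B.det)
    (μA μB μAB : Fin n → ℤ)
    (hμA : IsHodgePoint p κ A μA) (hμB : IsHodgePoint p κ B μB)
    (hμAB : IsHodgePoint p κ (A * B) μAB) :
    (∀ l, 1 ≤ l → l ≤ n →
      (∑ i : Fin n, if n - l ≤ (i : ℕ) then μA i else 0) +
        (∑ i : Fin n, if n - l ≤ (i : ℕ) then μB i else 0) ≤
      ∑ i : Fin n, if n - l ≤ (i : ℕ) then μAB i else 0) ∧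
    (∑ i, μAB i = ∑ i, μA i + ∑ i, μB i) := by
  classical
  obtain ⟨hantA, c₁, c₂, ⟨d₁, hd₁, rfl⟩, ⟨d₂, hd₂, rfl⟩, hAdec⟩ := hμA
  obtain ⟨hantB, c₃, c₄, ⟨d₃, hd₃, rfl⟩, ⟨d₄, hd₄, rfl⟩, hBdec⟩ := hμB
  obtain ⟨hantAB, g₁, g₂, ⟨e₁, he₁, rfl⟩, ⟨e₂, he₂, rfl⟩, hABdec⟩ := hμAB
  obtain ⟨e₁', he₁', he₁'l, he₁'r⟩ := exists_inv_mat he₁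
  obtain ⟨e₂', he₂', he₂'l, he₂'r⟩ := exists_inv_mat he₂
  set φ := algebraMap 𝕎 K with hφ
  set DA := Matrix.diagonal (fun i => (p : K) ^ (μA i)) with hDA
  set DB := Matrix.diagonal (fun i => (p : K) ^ (μB i)) with hDB
  set DAB := Matrix.diagonal (fun i => (p : K) ^ (μAB i)) with hDAB
  -- The master identity
  have h0 : DAB = (e₁'.map φ) * (A * B) * (e₂'.map φ) := by
    rw [hABdec]
    refine Eq.symm ?_
    calc (e₁'.map φ) * (e₁.map φ * DAB * e₂.map φ) * (e₂'.map φ)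
        = ((e₁' * e₁).map φ) * DAB * ((e₂ * e₂').map φ) := by
          simp only [Matrix.map_mul, Matrix.mul_assoc]
      _ = DAB := by
          rw [he₁'r, he₂'l, Matrix.map_one φ (map_zero φ) (map_one φ), Matrix.one_mul,
            Matrix.mul_one]
  have h1 : DAB = ((e₁' * d₁).map φ) * (DA * (((d₂ * d₃).map φ) * (DB * ((d₄ * e₂').map φ)))) := by
    rw [h0, hAdec, hBdec]
    simp only [Matrix.map_mul, Matrix.mul_assoc]
  constructor
  · -- the inequality
    intro l hl1 hln
    set e : Fin l → Fin n := emb n l hln with he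
    have hkey := key_mem (e₁' * d₁) (d₂ * d₃) (d₄ * e₂') μA μB
      (∑ k : Fin l, μA (emb n l hln k)) (∑ k : Fin l, μB (emb n l hln k))
      (fun g hg => sum_antitone_le hl1 hln μA hantA g hg)
      (fun g hg => sum_antitone_le hl1 hln μB hantB g hg) e
    rw [← h1] at hkey
    have hdiag : DAB.submatrix e e = Matrix.diagonal ((fun i => (p : K) ^ (μAB i)) ∘ e) :=
      Matrix.submatrix_diagonal _ e (emb_inj hln)
    rw [hdiag, det_diagonal] at hkey
    have hprod : (∏ k : Fin l, ((fun i => (p : K) ^ (μAB i)) ∘ e) k)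
        = (p : K) ^ (∑ k : Fin l, μAB (emb n l hln k)) := by
      rw [← prod_zpow' pK_ne_zero]
      rfl
    rw [hprod] at hkey
    have hle := SV_zpow_le hkey
    rw [sum_if_eq_sum_emb hln μA, sum_if_eq_sum_emb hln μB, sum_if_eq_sum_emb hln μAB]
    exact hle
  · -- the equality of total sums
    have hdA : A.det = φ (d₁.det * d₂.det) * (p : K) ^ (∑ i, μA i) := by
      rw [hAdec]; exact det_decomp d₁ d₂ μA
    have hdB : B.det = φ (d₃.det * d₄.det) * (p : K) ^ (∑ i, μB i) := by
      rw [hBdec]; exact det_decomp d₃ d₄ μB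
    have hdAB : (A * B).det = φ (e₁.det * e₂.det) * (p : K) ^ (∑ i, μAB i) := by
      rw [hABdec]; exact det_decomp e₁ e₂ μAB
    have hEQ : φ (e₁.det * e₂.det) * (p : K) ^ (∑ i, μAB i)
        = φ ((d₁.det * d₂.det) * (d₃.det * d₄.det)) * (p : K) ^ (∑ i, μA i + ∑ i, μB i) := by
      rw [← hdAB, det_mul, hdA, hdB, _root_.map_mul, zpow_add₀ pK_ne_zero]
      simp only [_root_.map_mul]
      ring
    obtain ⟨X, hX⟩ := (he₁.mul he₂)
    obtain ⟨Y, hY⟩ := ((hd₁.mul hd₂).mul (hd₃.mul hd₄))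
    have hs1 : SV p κ (∑ i, μA i + ∑ i, μB i) ((p : K) ^ (∑ i, μAB i)) := by
      refine ⟨(↑X⁻¹ : 𝕎) * ((d₁.det * d₂.det) * (d₃.det * d₄.det)), ?_⟩
      have : φ (↑X⁻¹) * (φ (e₁.det * e₂.det) * (p : K) ^ (∑ i, μAB i))
          = (p : K) ^ (∑ i, μAB i) := by
        rw [← mul_assoc, ← _root_.map_mul, ← hX, Units.inv_mul, (algebraMap 𝕎 K).map_one,
          one_mul]
      rw [← this, hEQ]
      simp only [← hφ, _root_.map_mul]
      ring
    have hs2 : SV p κ (∑ i, μAB i) ((p : K) ^ (∑ i, μA i + ∑ i, μB i)) := by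
      refine ⟨(↑Y⁻¹ : 𝕎) * (e₁.det * e₂.det), ?_⟩
      have : φ (↑Y⁻¹) * (φ ((d₁.det * d₂.det) * (d₃.det * d₄.det))
          * (p : K) ^ (∑ i, μA i + ∑ i, μB i)) = (p : K) ^ (∑ i, μA i + ∑ i, μB i) := by
        rw [← mul_assoc, ← _root_.map_mul, ← hY, Units.inv_mul, (algebraMap 𝕎 K).map_one,
          one_mul]
      rw [← this, ← hEQ]
      simp only [← hφ, _root_.map_mul]
      ring
    have := SV_zpow_le hs1
    have := SV_zpow_le hs2
    omega

end
end
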